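/- Let f : ℝ → [0,1] be a nondecreasing CDF and define the pseudoinverse Q⁻¹(r) = inf{x : f(x) ≥ r} for r ∈ [0,1]. If two CDFs Q_μ, Q_ν of measures μ, ν on ℝ coincide at the midpoints of every bucket of width b (i.e., Q_μ(m_i) = Q_ν(m_i) for the midpoint m_i of each bucket), and both measures are supported on the same bucket partition structure, then sup_{r ∈ (0,1)} |Q_μ⁻¹(r) − Q_ν⁻¹(r)| ≤ b. -/

import Mathlib

open MeasureTheory ProbabilityTheory Filter

lemma exists_midpoint_between (x₀ b : ℝ) (hb : 0 < b) (x : ℝ) :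
    ∃ i : ℤ, x ≤ x₀ + (i + 1 / 2) * b ∧ x₀ + (i + 1 / 2) * b ≤ x + b := by
  set c : ℝ := (x - x₀) / b with hc
  refine ⟨⌈c - 1 / 2⌉, ?_, ?_⟩
  · have h1 : c - 1 / 2 ≤ (⌈c - 1 / 2⌉ : ℝ) := Int.le_ceil _
    have hcb : c * b = x - x₀ := by rw [hc, div_mul_cancel₀ _ hb.ne']
    nlinarith
  · have h2 : (⌈c - 1 / 2⌉ : ℝ) < c - 1 / 2 + 1 := Int.ceil_lt_add_one _
    have hcb : c * b = x - x₀ := by rw [hc, div_mul_cancel₀ _ hb.ne']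
    nlinarith

lemma pinv_le (μ ν : Measure ℝ) [IsProbabilityMeasure μ] [IsProbabilityMeasure ν]
    (x₀ b : ℝ) (hb : 0 < b)
    (hmid : ∀ i : ℤ, cdf μ (x₀ + (i + 1 / 2) * b) = cdf ν (x₀ + (i + 1 / 2) * b))
    {r : ℝ} (hr : r ∈ Set.Ioo (0 : ℝ) 1) :
    sInf {x : ℝ | r ≤ cdf μ x} ≤ sInf {x : ℝ | r ≤ cdf ν x} + b := by
  obtain ⟨hr0, hr1⟩ := hr
  -- ν-set nonempty
  have hneν : {x : ℝ | r ≤ cdf ν x}.Nonempty := by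
    have := (tendsto_cdf_atTop ν).eventually (eventually_ge_nhds hr1)
    obtain ⟨x, hx⟩ := this.exists
    exact ⟨x, hx⟩
  -- μ-set bddBelow
  have hbddμ : BddBelow {x : ℝ | r ≤ cdf μ x} := by
    have := (tendsto_cdf_atBot μ).eventually (eventually_lt_nhds hr0)
    obtain ⟨y, hy⟩ := this.exists
    refine ⟨y, fun x hx => ?_⟩
    by_contra h
    push_neg at h
    exact absurd (hx.trans (monotone_cdf μ h.le)) (not_le.mpr hy)
  rw [← sub_le_iff_le_add]
  refine le_csInf hneν fun x hx => ?_
  obtain ⟨i, hxm, hmx⟩ := exists_midpoint_between x₀ b hb x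
  have hm : r ≤ cdf μ (x₀ + (i + 1 / 2) * b) := by
    rw [hmid i]
    exact le_trans hx (monotone_cdf ν hxm)
  have : sInf {x : ℝ | r ≤ cdf μ x} ≤ x₀ + (i + 1 / 2) * b := csInf_le hbddμ hm
  linarith

/-- if the CDFs of two probability measures `μ, ν` on ℝ coincide at the
midpoints `m_i = x₀ + (i + 1/2)·b` of every bucket of width `b`, then their pseudoinverses
`Q⁻¹(r) = inf{x : Q x ≥ r}` differ by at most `b` for every `r ∈ (0,1)`. -/
theorem pseudoinverse_close_of_cdf_eq_at_midpoints
    (μ ν : Measure ℝ) [IsProbabilityMeasure μ] [IsProbabilityMeasure ν]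
    (x₀ b : ℝ) (hb : 0 < b)
    (hmid : ∀ i : ℤ, cdf μ (x₀ + (i + 1 / 2) * b) = cdf ν (x₀ + (i + 1 / 2) * b)) :
    ∀ r ∈ Set.Ioo (0 : ℝ) 1,
      |sInf {x : ℝ | r ≤ cdf μ x} - sInf {x : ℝ | r ≤ cdf ν x}| ≤ b := by
  intro r hr
  rw [abs_sub_le_iff]
  constructor
  · linarith [pinv_le μ ν x₀ b hb hmid hr]
  · linarith [pinv_le ν μ x₀ b hb (fun i => (hmid i).symm) hr]
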